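/- Let 2 < q < p < 4, B > 0, Λ > 0 and M > 0, and set t̃₀ = ((p−2)(p−q)M/(2(4−q)B))^(1/(4−p)). Define T₁ : (0,∞) → ℝ by T₁(t) = B·t² − Λ·t^(q−2) − M·t^(p−2). Then T₁ has a unique critical point t̃₁ in (0,∞), t̃₁ > t̃₀, T₁ is strictly decreasing on (0, t̃₁) and strictly increasing on (t̃₁, ∞), and the minimum value satisfies min T₁ = T₁(t̃₁) ≤ T₁(t̃₀) = −((4−p)(p+2−q)/(2(4−q)))·M·((p−2)(p−q)M/(2(4−q)B))^((p−2)/(4−p)) − Λ·((p−2)(p−q)M/(2(4−q)B))^((q−2)/(4−p)). -/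

import Mathlib

open Real Set Filter

/-- For `2 < q < p < 4`, `B, Λ, M > 0` and
`t̃₀ = ((p−2)(p−q)M/(2(4−q)B))^(1/(4−p))`, the function
`T₁ t = B·t² − Λ·t^(q−2) − M·t^(p−2)` has a unique critical point `t̃₁` in `(0,∞)`,
`t̃₁ > t̃₀`, `T₁` is strictly decreasing on `(0, t̃₁)` and strictly increasing on
`(t̃₁, ∞)`, and `min T₁ = T₁(t̃₁) ≤ T₁(t̃₀)`, where `T₁(t̃₀)` equals the displayed
explicit value. -/
theorem stmt_5 (q p B Λ M : ℝ) (hq : 2 < q) (hqp : q < p) (hp : p < 4)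
    (hB : 0 < B) (hΛ : 0 < Λ) (hM : 0 < M) :
    let T₁ : ℝ → ℝ := fun t => B * t ^ 2 - Λ * t ^ (q - 2) - M * t ^ (p - 2)
    let t0 : ℝ := ((p - 2) * (p - q) * M / (2 * (4 - q) * B)) ^ ((1 : ℝ) / (4 - p))
    ∃ t1 : ℝ, 0 < t1 ∧ deriv T₁ t1 = 0 ∧
      (∀ t : ℝ, 0 < t → deriv T₁ t = 0 → t = t1) ∧
      t0 < t1 ∧ StrictAntiOn T₁ (Ioo 0 t1) ∧ StrictMonoOn T₁ (Ioi t1) ∧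
      (∀ t : ℝ, 0 < t → T₁ t1 ≤ T₁ t) ∧ T₁ t1 ≤ T₁ t0 ∧
      T₁ t0 = -((4 - p) * (p + 2 - q) / (2 * (4 - q))) * M *
          ((p - 2) * (p - q) * M / (2 * (4 - q) * B)) ^ ((p - 2) / (4 - p))
        - Λ * ((p - 2) * (p - q) * M / (2 * (4 - q) * B)) ^ ((q - 2) / (4 - p)) := by
  intro T₁ t0
  set A : ℝ := (p - 2) * (p - q) * M / (2 * (4 - q) * B) with hAdef
  have hA : 0 < A := by
    apply div_pos
    · have : 0 < (p-2)*(p-q) := by nlinarith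
      positivity
    · nlinarith
  have h4p : 0 < 4 - p := by linarith
  have hne1 : (2:ℝ) * (4 - q) ≠ 0 := by nlinarith
  have hne2 : B ≠ 0 := hB.ne'
  have hne3 : (p - 2) * (p - q) * M ≠ 0 := ne_of_gt (mul_pos (mul_pos (by linarith : (0:ℝ) < p - 2) (by linarith : (0:ℝ) < p - q)) hM)
  have hne4 : p - q ≠ 0 := by linarith
  have hne5 : (4:ℝ) - q ≠ 0 := by linarith
  have hne6 : (4:ℝ) - p ≠ 0 := h4p.ne'
  have ht0 : 0 < t0 := rpow_pos_of_pos hA _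
  have hpow : ∀ r : ℝ, t0 ^ r = A ^ (r / (4 - p)) := by
    intro r
    rw [show t0 = A ^ ((1:ℝ)/(4-p)) from rfl, ← Real.rpow_mul hA.le]
    congr 1
    field_simp
  -- the auxiliary function g
  set g : ℝ → ℝ := fun t => Λ * (q - 2) * t ^ (q - 4) + M * (p - 2) * t ^ (p - 4) with hgdef
  -- derivative of T₁
  have hderiv : ∀ t : ℝ, 0 < t → HasDerivAt T₁ (t * (2 * B - g t)) t := by
    intro t ht
    have h1 : HasDerivAt (fun t : ℝ => t ^ (2:ℕ)) (2 * t ^ (1:ℕ)) t := by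
      simpa using hasDerivAt_pow 2 t
    have h2 : HasDerivAt (fun t : ℝ => t ^ (q - 2)) ((q - 2) * t ^ (q - 2 - 1)) t :=
      Real.hasDerivAt_rpow_const (Or.inl ht.ne')
    have h3 : HasDerivAt (fun t : ℝ => t ^ (p - 2)) ((p - 2) * t ^ (p - 2 - 1)) t :=
      Real.hasDerivAt_rpow_const (Or.inl ht.ne')
    have key := ((h1.const_mul B).sub (h2.const_mul Λ)).sub (h3.const_mul M)
    have e1 : t ^ (q - 2 - 1) = t ^ (q - 4) * t := by
      rw [show q - 2 - 1 = (q - 4) + 1 by ring, Real.rpow_add ht, Real.rpow_one]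
    have e2 : t ^ (p - 2 - 1) = t ^ (p - 4) * t := by
      rw [show p - 2 - 1 = (p - 4) + 1 by ring, Real.rpow_add ht, Real.rpow_one]
    refine key.congr_deriv ?_
    rw [e1, e2]
    simp only [hgdef, pow_one]
    ring
  -- g is strictly antitone on (0, ∞)
  have hganti : StrictAntiOn g (Ioi 0) := by
    intro x hx y hy hxy
    simp only [hgdef]
    have h1 := Real.rpow_lt_rpow_of_neg hx hxy (show q - 4 < 0 by linarith)
    have h2 := Real.rpow_lt_rpow_of_neg hx hxy (show p - 4 < 0 by linarith)
    have c1 : 0 < Λ * (q - 2) := by nlinarith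
    have c2 : 0 < M * (p - 2) := by nlinarith
    nlinarith [mul_lt_mul_of_pos_left h1 c1, mul_lt_mul_of_pos_left h2 c2]
  -- g t0 > 2B
  have hgt0 : 2 * B < g t0 := by
    have ht0p : t0 ^ (p - 4) = A⁻¹ := by
      rw [hpow, show (p-4)/(4-p) = -1 by field_simp; ring, Real.rpow_neg_one]
    have h2nd : M * (p - 2) * t0 ^ (p - 4) = 2 * (4 - q) * B / (p - q) := by
      rw [ht0p, hAdef, inv_div]
      have hp2 : p - 2 ≠ 0 := by linarith
      field_simp
    have hlt : 2 * B < M * (p - 2) * t0 ^ (p - 4) := by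
      rw [h2nd, lt_div_iff₀ (by linarith : (0:ℝ) < p - q)]
      nlinarith
    have hfst : 0 < Λ * (q - 2) * t0 ^ (q - 4) := by
      have := rpow_pos_of_pos ht0 (q - 4)
      have : 0 < Λ * (q-2) := by nlinarith
      positivity
    simp only [hgdef]
    nlinarith
  -- g tends to 0 at infinity
  have htend : Tendsto g atTop (nhds 0) := by
    have h1 : Tendsto (fun t : ℝ => t ^ (q - 4)) atTop (nhds 0) := by
      rw [show q - 4 = -(4 - q) by ring]
      exact tendsto_rpow_neg_atTop (by linarith)
    have h2 : Tendsto (fun t : ℝ => t ^ (p - 4)) atTop (nhds 0) := by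
      rw [show p - 4 = -(4 - p) by ring]
      exact tendsto_rpow_neg_atTop (by linarith)
    have := (h1.const_mul (Λ * (q - 2))).add (h2.const_mul (M * (p - 2)))
    simpa using this
  -- pick T > t0 with g T < 2B
  obtain ⟨T, hTge, hgT⟩ : ∃ T : ℝ, t0 + 1 ≤ T ∧ g T < 2 * B := by
    have h1 : ∀ᶠ T in atTop, g T < 2 * B :=
      htend.eventually_lt_const (by linarith)
    have h2 : ∀ᶠ T : ℝ in atTop, t0 + 1 ≤ T := eventually_ge_atTop _
    exact (h2.and h1).exists
  have hT0T : t0 < T := by linarith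
  have hTpos : 0 < T := by linarith
  -- continuity of g
  have hgc : ∀ t : ℝ, 0 < t → ContinuousAt g t := by
    intro t ht
    exact (continuousAt_const.mul (Real.continuousAt_rpow_const t _ (Or.inl ht.ne'))).add
      (continuousAt_const.mul (Real.continuousAt_rpow_const t _ (Or.inl ht.ne')))
  -- IVT to find t1
  obtain ⟨t1, ht1mem, ht1eq⟩ : ∃ t1 ∈ Icc t0 T, g t1 = 2 * B := by
    have hcont : ContinuousOn g (Icc t0 T) := by
      intro x hx
      exact (hgc x (lt_of_lt_of_le ht0 hx.1)).continuousWithinAt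
    have := intermediate_value_Icc' hT0T.le hcont
      (show 2 * B ∈ Icc (g T) (g t0) from ⟨hgT.le, hgt0.le⟩)
    obtain ⟨t1, ht1, heq⟩ := this
    exact ⟨t1, ht1, heq⟩
  have ht1pos : 0 < t1 := lt_of_lt_of_le ht0 ht1mem.1
  have ht0t1 : t0 < t1 := by
    rcases eq_or_lt_of_le ht1mem.1 with h | h
    · exfalso; rw [← h] at ht1eq; linarith
    · exact h
  -- sign of deriv
  have hdneg : ∀ t ∈ Ioo (0:ℝ) t1, deriv T₁ t < 0 := by
    intro t ht
    rw [(hderiv t ht.1).deriv]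
    have : g t1 < g t := hganti (mem_Ioi.mpr ht.1) (mem_Ioi.mpr ht1pos) ht.2
    rw [ht1eq] at this
    exact mul_neg_of_pos_of_neg ht.1 (by linarith)
  have hdpos : ∀ t ∈ Ioi t1, 0 < deriv T₁ t := by
    intro t ht
    have htp : 0 < t := ht1pos.trans ht
    rw [(hderiv t htp).deriv]
    have : g t < g t1 := hganti (mem_Ioi.mpr ht1pos) (mem_Ioi.mpr htp) ht
    rw [ht1eq] at this
    exact mul_pos htp (by linarith)
  -- continuity of T₁
  have hTc : ∀ t : ℝ, 0 < t → ContinuousAt T₁ t := by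
    intro t ht
    exact ((continuousAt_const.mul ((continuous_pow 2).continuousAt)).sub
      (continuousAt_const.mul (Real.continuousAt_rpow_const t _ (Or.inl ht.ne')))).sub
      (continuousAt_const.mul (Real.continuousAt_rpow_const t _ (Or.inl ht.ne')))
  -- monotonicity on closed-ish intervals
  have hanti : StrictAntiOn T₁ (Ioc 0 t1) := by
    apply strictAntiOn_of_deriv_neg (convex_Ioc 0 t1)
    · intro x hx; exact (hTc x hx.1).continuousWithinAt
    · rw [interior_Ioc]; exact hdneg
  have hmono : StrictMonoOn T₁ (Ici t1) := by
    apply strictMonoOn_of_deriv_pos (convex_Ici t1)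
    · intro x hx; exact (hTc x (lt_of_lt_of_le ht1pos hx)).continuousWithinAt
    · rw [interior_Ici]; exact hdpos
  have hmin : ∀ t : ℝ, 0 < t → T₁ t1 ≤ T₁ t := by
    intro t ht
    rcases lt_trichotomy t t1 with h | h | h
    · exact (hanti ⟨ht, h.le⟩ ⟨ht1pos, le_refl _⟩ h).le
    · rw [h]
    · exact (hmono (self_mem_Ici) (le_of_lt h) h).le
  refine ⟨t1, ht1pos, ?_, ?_, ht0t1, hanti.mono Ioo_subset_Ioc_self, hmono.mono Ioi_subset_Ici_self, hmin, hmin t0 ht0, ?_⟩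
  · rw [(hderiv t1 ht1pos).deriv, ht1eq]; ring
  · intro t ht hd
    rw [(hderiv t ht).deriv] at hd
    have : g t = 2 * B := by
      rcases mul_eq_zero.mp hd with h | h
      · exact absurd h ht.ne'
      · linarith
    exact hganti.injOn (mem_Ioi.mpr ht) (mem_Ioi.mpr ht1pos) (this.trans ht1eq.symm)
  · -- explicit value at t0
    have e2' : t0 ^ (2:ℕ) = A * A ^ ((p-2)/(4-p)) := by
      rw [← Real.rpow_natCast t0 2, hpow, show ((2:ℕ):ℝ) = 2 by norm_num,
        show (2:ℝ)/(4-p) = 1 + (p-2)/(4-p) by field_simp; ring,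
        Real.rpow_add hA, Real.rpow_one]
    have eq' : t0 ^ (q-2) = A ^ ((q-2)/(4-p)) := hpow _
    have ep' : t0 ^ (p-2) = A ^ ((p-2)/(4-p)) := hpow _
    have hBA : B * A = (p-2)*(p-q)*M/(2*(4-q)) := by
      rw [hAdef]; field_simp
    have hcoef : B * A - M = -((4 - p) * (p + 2 - q) / (2 * (4 - q))) * M := by
      rw [hBA]; field_simp; ring
    show B * t0 ^ 2 - Λ * t0 ^ (q-2) - M * t0 ^ (p-2) = _
    rw [e2', eq', ep']
    linear_combination (A ^ ((p-2)/(4-p))) * hcoef
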